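/- Let G be a group generated by a finite set X, let H ≤ G, and let d be a left invariant metric on H. Suppose there exists an isometric action of G on a metric space S and a coarsely H-equivariant quasi-isometric embedding f : (H, d) → S. Then there exists a constant K such that d(1, h) ≤ K · |h|_X for all h ∈ H. -/
import Mathlib


/-- The word length of `g` with respect to a generating set `X`. -/
noncomputable def wordLength {G : Type*} [Group G] (X : Finset G) (g : G) : ℕ :=
  sInf {n : ℕ | ∃ l : List G, (∀ x ∈ l, x ∈ X) ∧ l.prod = g ∧ l.length = n}

/-- If `G` is generated by a finite set `X`, `H ≤ G` carries a left invariant metric `d`,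
and the left action of `H` on `(H, d)` extends to an isometric `G`-action (via a coarsely
`H`-equivariant quasi-isometric embedding `f`), then `d(1,h) ≤ K |h|_X` for some `K`. -/
theorem dist_le_wordLength_of_extension {G : Type*} [Group G] (X : Finset G)
    (hgen : ∀ g : G, ∃ l : List G, (∀ x ∈ l, x ∈ X) ∧ l.prod = g)
    (H : Subgroup G) (d : H → H → ℝ)
    (hd_self : ∀ x : H, d x x = 0)
    (hd_eq : ∀ x y : H, d x y = 0 → x = y)
    (hd_symm : ∀ x y : H, d x y = d y x)
    (hd_tri : ∀ x y z : H, d x z ≤ d x y + d y z)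
    (hd_inv : ∀ h x y : H, d (h * x) (h * y) = d x y)
    {S : Type*} [MetricSpace S] [MulAction G S]
    (hisom : ∀ (g : G) (x y : S), dist (g • x) (g • y) = dist x y)
    (f : H → S)
    (hqie : ∃ C : ℝ, 1 ≤ C ∧ ∀ x y : H,
      (1 / C) * d x y - C ≤ dist (f x) (f y) ∧ dist (f x) (f y) ≤ C * d x y + C)
    (hce : ∀ x : H, ∃ D : ℝ, ∀ h : H, dist (f (h * x)) ((h : G) • f x) ≤ D) :
    ∃ K : ℝ, ∀ h : H, d 1 h ≤ K * (wordLength X (h : G) : ℝ) := by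
  obtain ⟨C, hC1, hC⟩ := hqie
  have hCpos : (0 : ℝ) < C := lt_of_lt_of_le one_pos hC1
  obtain ⟨D, hD⟩ := hce 1
  set s := f 1 with hs
  set M : ℝ := ∑ x ∈ X, dist s (x • s) with hM
  have hMx : ∀ x ∈ X, dist s (x • s) ≤ M := fun x hx =>
    Finset.single_le_sum (f := fun y => dist s (y • s)) (fun i _ => dist_nonneg) hx
  have hM0 : 0 ≤ M := Finset.sum_nonneg fun i _ => dist_nonneg
  have key : ∀ l : List G, (∀ x ∈ l, x ∈ X) → dist s (l.prod • s) ≤ l.length * M := by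
    intro l
    induction l with
    | nil => intro _; simp
    | cons a t ih =>
      intro hmem
      have h1 : dist s ((a :: t).prod • s) ≤ dist s (a • s) + dist (a • s) (a • t.prod • s) := by
        rw [List.prod_cons, mul_smul]; exact dist_triangle _ _ _
      rw [hisom] at h1
      calc dist s ((a :: t).prod • s) ≤ dist s (a • s) + dist s (t.prod • s) := h1
        _ ≤ M + t.length * M :=
          add_le_add (hMx a (hmem a (by simp))) (ih fun x hx => hmem x (by simp [hx]))
        _ = (a :: t).length * M := by push_cast [List.length_cons]; ring
  have hD0 : 0 ≤ D := le_trans dist_nonneg (hD 1)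
  refine ⟨C * M + C * D + C * C, fun h => ?_⟩
  have hne : {n : ℕ | ∃ l : List G, (∀ x ∈ l, x ∈ X) ∧ l.prod = (h : G) ∧ l.length = n}.Nonempty := by
    obtain ⟨l, hl1, hl2⟩ := hgen (h : G)
    exact ⟨l.length, l, hl1, hl2, rfl⟩
  obtain ⟨l, hl1, hl2, hl3⟩ := Nat.sInf_mem hne
  have hwl : (wordLength X (h : G) : ℝ) = (l.length : ℝ) := by
    rw [wordLength, ← hl3]
  have h1 : dist s ((h : G) • s) ≤ (wordLength X (h : G) : ℝ) * M := by
    rw [hwl, ← hl2]; exact key l hl1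
  have h2 : dist (f h) ((h : G) • s) ≤ D := by
    have := hD h; rwa [mul_one] at this
  have h3 : dist s (f h) ≤ (wordLength X (h : G) : ℝ) * M + D :=
    calc dist s (f h) ≤ dist s ((h : G) • s) + dist ((h : G) • s) (f h) := dist_triangle _ _ _
      _ ≤ (wordLength X (h : G) : ℝ) * M + D := by
          rw [dist_comm ((h : G) • s) (f h)]; exact add_le_add h1 h2
  have hlow := (hC 1 h).1
  rw [← hs] at hlow
  -- d 1 h ≤ C * dist s (f h) + C * C
  have h4 : d 1 h ≤ C * dist s (f h) + C * C := by
    have hstep : C * (1 / C * d 1 h - C) ≤ C * dist s (f h) :=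
      mul_le_mul_of_nonneg_left hlow hCpos.le
    have hid : C * (1 / C * d 1 h - C) = d 1 h - C * C := by
      field_simp
    linarith
  by_cases hone : h = 1
  · subst hone
    rw [hd_self]
    positivity
  · have hlen : 1 ≤ (wordLength X (h : G) : ℝ) := by
      rw [hwl]
      have : l ≠ [] := by
        rintro rfl
        exact hone (Subtype.ext (by simpa using hl2.symm))
      have : 1 ≤ l.length := List.length_pos_iff.mpr this
      exact_mod_cast this
    nlinarith [h3, h4, mul_le_mul_of_nonneg_left h3 hCpos.le, hM0, hD0, hCpos,
      mul_nonneg (mul_nonneg hCpos.le hD0) (sub_nonneg.mpr hlen),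
      mul_nonneg (mul_nonneg hCpos.le hCpos.le) (sub_nonneg.mpr hlen)]
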